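/- Let f : 2^S → ℝ≥0 be modular and let S_1,...,S_K ⊆ S. For integers 0 ≤ r' ≤ J ≤ K, equality holds: ∑_{r=1}^{r'} f(S_r) + ∑_{r=r'+1}^{J} f(S_r ∪ S^{(r'+1)}([r])) = ∑_{r=1}^{r'} f(S^{(r)}([J])) + ∑_{r=r'+1}^{J} f(S^{(r'+1)}([r])). -/

import Mathlib

open Finset

/-- `cutOp S U r` is `S^{(r)}(U) = ⋃_{U' ⊆ U, |U'| = r} ⋂_{k ∈ U'} S_k`. -/
def cutOp {α : Type*} [Fintype α] [DecidableEq α] (S : ℕ → Finset α) (U : Finset ℕ)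
    (r : ℕ) : Finset α :=
  (U.powersetCard r).sup fun V => V.inf S

lemma mem_inf_iff {α : Type*} [Fintype α] [DecidableEq α] {V : Finset ℕ} {S : ℕ → Finset α} {a : α} :
    a ∈ V.inf S ↔ ∀ k ∈ V, a ∈ S k := by
  induction V using Finset.induction_on with
  | empty => simp
  | insert _ _ h ih => simp [Finset.inf_insert, ih]

lemma mem_cutOp {α : Type*} [Fintype α] [DecidableEq α] {S : ℕ → Finset α} {U : Finset ℕ} {r : ℕ} {a : α} :
    a ∈ cutOp S U r ↔ r ≤ (U.filter fun k => a ∈ S k).card := by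
  unfold cutOp
  rw [Finset.mem_sup]
  constructor
  · rintro ⟨V, hV, haV⟩
    rw [Finset.mem_powersetCard] at hV
    rw [mem_inf_iff] at haV
    calc r = V.card := hV.2.symm
    _ ≤ _ := Finset.card_le_card (fun k hk => Finset.mem_filter.2 ⟨hV.1 hk, haV k hk⟩)
  · intro hr
    obtain ⟨V, hVsub, hVcard⟩ := Finset.exists_subset_card_eq hr
    refine ⟨V, Finset.mem_powersetCard.2 ⟨hVsub.trans (Finset.filter_subset _ _), hVcard⟩, ?_⟩
    rw [mem_inf_iff]
    exact fun k hk => (Finset.mem_filter.1 (hVsub hk)).2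

lemma modular_rep {α : Type*} [DecidableEq α] (f : Finset α → ℝ)
    (hf : ∀ A B : Finset α, f A + f B = f (A ∪ B) + f (A ∩ B)) (A : Finset α) :
    f A = f ∅ + ∑ a ∈ A, (f {a} - f ∅) := by
  induction A using Finset.induction_on with
  | empty => simp
  | @insert a A' h ih =>
    have h1 := hf {a} A'
    have h2 : ({a} : Finset α) ∪ A' = insert a A' := by ext; simp [or_comm]
    have h3 : ({a} : Finset α) ∩ A' = ∅ := by ext; simp; rintro rfl; exact h
    rw [h2, h3] at h1
    rw [Finset.sum_insert h]
    linarith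

lemma icc_succ (n : ℕ) : Icc 1 (n+1) = insert (n+1) (Icc 1 n) := by
  ext x; simp [Finset.mem_Icc]; omega

lemma sum_boole_min (r' m : ℕ) :
    ∑ r ∈ Icc 1 r', (if r ≤ m then 1 else 0) = min r' m := by
  induction r' with
  | zero => simp
  | succ n ih =>
    rw [icc_succ, Finset.sum_insert (by simp), ih]
    by_cases h : n + 1 ≤ m <;> simp [h] <;> omega

lemma count_key (P : ℕ → Prop) [DecidablePred P] (r' : ℕ) (n : ℕ) :
    min r' ((Icc 1 n).filter P).card
      + ∑ r ∈ Icc 1 n, (if P r ∧ r' + 1 ≤ ((Icc 1 r).filter P).card then 1 else 0)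
    = ((Icc 1 n).filter P).card := by
  induction n with
  | zero => simp
  | succ n ih =>
    by_cases h : P (n+1) <;>
      simp only [icc_succ n, Finset.filter_insert, h, if_true, if_false, true_and, false_and,
        Finset.sum_insert (show (n+1) ∉ Icc 1 n by simp),
        Finset.card_insert_of_notMem (show (n+1) ∉ (Icc 1 n).filter P by simp)]
    · split_ifs with h2 <;> omega
    · omega

lemma key_count (P : ℕ → Prop) [DecidablePred P] (r' J : ℕ) (h1 : r' ≤ J) :
    (∑ r ∈ Icc 1 r', if P r then 1 else 0)
      + ∑ r ∈ Icc (r'+1) J, (if P r ∨ r' + 1 ≤ ((Icc 1 r).filter P).card then 1 else 0)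
    = (∑ r ∈ Icc 1 r', if r ≤ ((Icc 1 J).filter P).card then 1 else 0)
      + ∑ r ∈ Icc (r'+1) J, (if r' + 1 ≤ ((Icc 1 r).filter P).card then 1 else 0) := by
  have hsplit : ∀ g : ℕ → ℕ,
      (∑ r ∈ Icc 1 r', g r) + ∑ r ∈ Icc (r'+1) J, g r = ∑ r ∈ Icc 1 J, g r := by
    intro g
    rw [show Icc 1 r' = Ioc 0 r' from Finset.Icc_add_one_left_eq_Ioc 0 r',
      show Icc (r'+1) J = Ioc r' J from Finset.Icc_add_one_left_eq_Ioc r' J,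
      show Icc 1 J = Ioc 0 J from Finset.Icc_add_one_left_eq_Ioc 0 J]
    exact Finset.sum_Ioc_consecutive g (Nat.zero_le _) h1
  have hB : (∑ r ∈ Icc (r'+1) J, (if P r ∨ r' + 1 ≤ ((Icc 1 r).filter P).card then 1 else 0))
      + ∑ r ∈ Icc (r'+1) J, (if P r ∧ r' + 1 ≤ ((Icc 1 r).filter P).card then 1 else 0)
      = (∑ r ∈ Icc (r'+1) J, if P r then 1 else 0)
      + ∑ r ∈ Icc (r'+1) J, (if r' + 1 ≤ ((Icc 1 r).filter P).card then 1 else 0) := by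
    rw [← Finset.sum_add_distrib, ← Finset.sum_add_distrib]
    refine Finset.sum_congr rfl fun r _ => ?_
    by_cases hp : P r <;> by_cases hq : r' + 1 ≤ ((Icc 1 r).filter P).card <;> simp [hp, hq]
  have hA : (∑ r ∈ Icc 1 J, if P r then 1 else 0) = ((Icc 1 J).filter P).card :=
    (Finset.card_filter P (Icc 1 J)).symm
  have hC : (∑ r ∈ Icc 1 r', if r ≤ ((Icc 1 J).filter P).card then 1 else 0)
      = min r' ((Icc 1 J).filter P).card := sum_boole_min _ _
  have hD := count_key P r' J
  have hvanish : (∑ r ∈ Icc 1 r', if P r ∧ r' + 1 ≤ ((Icc 1 r).filter P).card then 1 else 0)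
      = 0 := by
    refine Finset.sum_eq_zero fun r hr => if_neg ?_
    rintro ⟨-, hle⟩
    have h2 : ((Icc 1 r).filter P).card ≤ r := by
      have := Finset.card_filter_le (Icc 1 r) P
      rwa [Nat.card_Icc, Nat.add_sub_cancel] at this
    have := Finset.mem_Icc.1 hr
    omega
  have h3 := hsplit (fun r => if P r then 1 else 0)
  have h4 := hsplit (fun r => if P r ∧ r' + 1 ≤ ((Icc 1 r).filter P).card then 1 else 0)
  omega

theorem lemma1_modular {α : Type*} [Fintype α] [DecidableEq α] (K : ℕ)
    (f : Finset α → ℝ) (hf0 : ∀ A, 0 ≤ f A)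
    (hf : ∀ A B : Finset α, f A + f B = f (A ∪ B) + f (A ∩ B))
    (S : ℕ → Finset α) (r' J : ℕ) (h1 : r' ≤ J) (h2 : J ≤ K) :
    ∑ r ∈ Finset.Icc 1 r', f (S r)
      + ∑ r ∈ Finset.Icc (r' + 1) J, f (S r ∪ cutOp S (Finset.Icc 1 r) (r' + 1))
    = ∑ r ∈ Finset.Icc 1 r', f (cutOp S (Finset.Icc 1 J) r)
      + ∑ r ∈ Finset.Icc (r' + 1) J, f (cutOp S (Finset.Icc 1 r) (r' + 1)) := by
  classical
  set w : α → ℝ := fun a => f {a} - f ∅ with hw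
  have key : ∀ (I : Finset ℕ) (T : ℕ → Finset α),
      ∑ r ∈ I, f (T r)
        = I.card * f ∅ + ∑ a ∈ univ, ∑ r ∈ I, (if a ∈ T r then w a else 0) := by
    intro I T
    rw [Finset.sum_congr rfl fun r _ => modular_rep f hf (T r), Finset.sum_add_distrib,
      Finset.sum_const, nsmul_eq_mul]
    congr 1
    rw [show ∑ r ∈ I, ∑ a ∈ T r, w a
        = ∑ r ∈ I, ∑ a ∈ univ, (if a ∈ T r then w a else 0) from
      Finset.sum_congr rfl fun r _ => by rw [Finset.sum_ite_mem, Finset.univ_inter],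
      Finset.sum_comm]
  rw [key (Icc 1 r') S, key (Icc (r'+1) J) (fun r => S r ∪ cutOp S (Icc 1 r) (r'+1)),
    key (Icc 1 r') (fun r => cutOp S (Icc 1 J) r),
    key (Icc (r'+1) J) (fun r => cutOp S (Icc 1 r) (r'+1))]
  have main : (∑ a ∈ univ, ∑ r ∈ Icc 1 r', (if a ∈ S r then w a else 0))
      + ∑ a ∈ univ, ∑ r ∈ Icc (r'+1) J,
          (if a ∈ S r ∪ cutOp S (Icc 1 r) (r'+1) then w a else 0)
      = (∑ a ∈ univ, ∑ r ∈ Icc 1 r', (if a ∈ cutOp S (Icc 1 J) r then w a else 0))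
      + ∑ a ∈ univ, ∑ r ∈ Icc (r'+1) J,
          (if a ∈ cutOp S (Icc 1 r) (r'+1) then w a else 0) := by
    rw [← Finset.sum_add_distrib, ← Finset.sum_add_distrib]
    refine Finset.sum_congr rfl fun a _ => ?_
    have rw1 : ∀ (I : Finset ℕ) (Q : ℕ → Prop) [DecidablePred Q],
        ∑ r ∈ I, (if Q r then w a else 0)
          = w a * (((∑ r ∈ I, if Q r then 1 else 0 : ℕ)) : ℝ) := by
      intro I Q _
      push_cast
      rw [Finset.mul_sum]
      exact Finset.sum_congr rfl fun r _ => by by_cases h : Q r <;> simp [h]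
    simp only [Finset.mem_union, mem_cutOp]
    rw [rw1 (Icc 1 r') (fun r => a ∈ S r),
      rw1 (Icc (r'+1) J)
        (fun r => a ∈ S r ∨ r' + 1 ≤ ((Icc 1 r).filter fun k => a ∈ S k).card),
      rw1 (Icc 1 r') (fun r => r ≤ ((Icc 1 J).filter fun k => a ∈ S k).card),
      rw1 (Icc (r'+1) J) (fun r => r' + 1 ≤ ((Icc 1 r).filter fun k => a ∈ S k).card)]
    rw [← mul_add, ← mul_add]
    congr 1
    exact_mod_cast key_count (fun r => a ∈ S r) r' J h1
  linarith [main]
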